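/- Let d ≥ 2 and s(d)=d(d+1)/2. For any 0 < δ < 1/2 and any N ∈ ℕ with Nδ > 1, letting μ_{[δ,1/2]} be the pushforward of Lebesgue measure on [δ,1/2] under t ↦ (t, t², …, t^d) and D_N = {ξ ∈ ℤ^d : |ξ_i| ≤ s(d)N^i, i=1,…,d}, we have ∑_{ξ ∈ D_N} |μ̂_{[δ,1/2]}(ξ)|² ≤ C δ^{1-d} N^{s(d)-d}, with C depending only on d. -/

import Mathlib

open MeasureTheory intervalIntegral

noncomputable def e (x : ℝ) : ℂ := Complex.exp (2 * Real.pi * Complex.I * x)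

lemma e_eq (x : ℝ) : e x = Complex.exp ((2 * Real.pi * x : ℝ) * Complex.I) := by
  unfold e; congr 1; push_cast; ring

lemma e_add (x y : ℝ) : e (x + y) = e x * e y := by
  unfold e; rw [← Complex.exp_add]; congr 1; push_cast; ring

lemma e_continuous : Continuous e := by
  unfold e; fun_prop

lemma norm_e (x : ℝ) : ‖e x‖ = 1 := by
  rw [e_eq, Complex.norm_exp_ofReal_mul_I]

lemma conj_e (x : ℝ) : (starRingEnd ℂ) (e x) = e (-x) := by
  unfold e
  rw [← Complex.exp_conj]
  congr 1
  simp only [map_mul, Complex.conj_I, Complex.conj_ofReal, map_ofNat]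
  push_cast
  ring

lemma e_nat_mul (k : ℕ) (x : ℝ) : e (k * x) = e x ^ k := by
  unfold e; rw [← Complex.exp_nat_mul]; congr 1; push_cast; ring

lemma norm_e_sub_one_aux {x : ℝ} (h0 : 0 ≤ x) (hx : x ≤ 1/2) : 4 * x ≤ ‖e x - 1‖ := by
  have hpi := Real.pi_pos
  have hsin : 2 * x ≤ Real.sin (Real.pi * x) := by
    have := Real.mul_le_sin (x := Real.pi * x) (by positivity) (by nlinarith)
    calc 2 * x = 2 / Real.pi * (Real.pi * x) := by field_simp
    _ ≤ _ := this
  have hsq : ‖e x - 1‖^2 = 2 - 2 * Real.cos (2 * Real.pi * x) := by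
    have hx2 : e x - 1 = Complex.ofReal (Real.cos (2*Real.pi*x) - 1)
        + Complex.ofReal (Real.sin (2*Real.pi*x)) * Complex.I := by
      rw [e_eq, Complex.exp_mul_I, ← Complex.ofReal_cos, ← Complex.ofReal_sin]
      push_cast; ring
    rw [hx2, Complex.sq_norm, Complex.normSq_add_mul_I]
    nlinarith [Real.sin_sq_add_cos_sq (2*Real.pi*x)]
  have hcos : Real.cos (2 * Real.pi * x) = 1 - 2 * Real.sin (Real.pi * x)^2 := by
    rw [show 2 * Real.pi * x = 2 * (Real.pi * x) by ring, Real.cos_two_mul]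
    nlinarith [Real.sin_sq_add_cos_sq (Real.pi * x)]
  have key : (4*x)^2 ≤ ‖e x - 1‖^2 := by
    rw [hsq, hcos]; nlinarith
  have h1 : (0:ℝ) ≤ 4 * x := by linarith
  nlinarith [norm_nonneg (e x - 1)]

lemma norm_e_sub_one {x : ℝ} (hx : |x| ≤ 1/2) : 4 * |x| ≤ ‖e x - 1‖ := by
  rcases le_or_gt 0 x with h | h
  · rw [abs_of_nonneg h]; exact norm_e_sub_one_aux h (by rwa [abs_of_nonneg h] at hx)
  · have h1 : ‖e x - 1‖ = ‖e (-x) - 1‖ := by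
      have : e (-x) - 1 = (starRingEnd ℂ) (e x - 1) := by
        rw [map_sub, conj_e]; simp
      rw [this, RCLike.norm_conj]
    rw [abs_of_neg h, h1]
    exact norm_e_sub_one_aux (by linarith) (by rwa [abs_of_neg h] at hx)

lemma norm_geom_sum_le {K : ℕ} {x : ℝ} (h0 : x ≠ 0) (hx : |x| ≤ 1/2) :
    ‖∑ k ∈ Finset.range K, e (k * x)‖ ≤ 1 / (2 * |x|) := by
  have habs : 0 < |x| := abs_pos.mpr h0
  have hlow : 4 * |x| ≤ ‖e x - 1‖ := norm_e_sub_one hx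
  have hne : e x ≠ 1 := by
    intro h
    rw [h] at hlow; simp at hlow; linarith
  have hgeom : ∑ k ∈ Finset.range K, e (k * x) = (e x ^ K - 1) / (e x - 1) := by
    rw [← geom_sum_eq hne]
    exact Finset.sum_congr rfl fun k _ => e_nat_mul k x
  rw [hgeom, norm_div]
  have h1 : ‖e x ^ K - 1‖ ≤ 2 := by
    calc ‖e x ^ K - 1‖ ≤ ‖e x ^ K‖ + ‖(1:ℂ)‖ := norm_sub_le _ _
    _ = 2 := by rw [norm_pow, norm_e]; norm_num
  have h2 : 0 < ‖e x - 1‖ := by linarith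
  rw [div_le_div_iff₀ h2 (by positivity)]
  nlinarith

lemma intervalIntegral_conj {f : ℝ → ℂ} {a b : ℝ} :
    (∫ x in a..b, (starRingEnd ℂ) (f x)) = (starRingEnd ℂ) (∫ x in a..b, f x) := by
  rw [intervalIntegral, intervalIntegral, integral_conj, integral_conj, map_sub]

set_option maxHeartbeats 2000000 in
lemma key_bound (δ : ℝ) (hδ : 0 < δ) (hδ2 : δ < 1/2) (d : ℕ) (hd : 1 ≤ d) (K : ℕ) (hK : 0 < K)
    (g : ℝ → ℂ) (hg : Continuous g) (hgn : ∀ t, ‖g t‖ = 1) :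
    ∑ p ∈ Finset.range K ×ˢ Finset.range K,
      ‖∫ t in δ..(1/2:ℝ), g t * e (-(t ^ d * (((p.2 : ℤ) - (p.1 : ℤ) : ℤ) : ℝ)))‖ ^ 2
      ≤ Real.pi * K / (2 * δ ^ (d - 1)) := by
  have hπ := Real.pi_pos
  set A : ℤ → ℂ := fun m => ∫ t in δ..(1/2:ℝ), g t * e (-(t ^ d * (m : ℝ))) with hA
  set S : ℝ → ℝ → ℂ := fun t u => ∑ k ∈ Finset.range K, e (k * (u ^ d - t ^ d)) with hS
  set β : ℝ := 2 * K * δ ^ (d - 1) with hβ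
  have hβ0 : 0 < β := by positivity
  have hab : δ ≤ (1/2 : ℝ) := le_of_lt hδ2
  have hcont : ∀ m : ℤ, Continuous (fun t : ℝ => g t * e (-(t ^ d * (m : ℝ)))) := by
    intro m
    exact hg.mul (e_continuous.comp (by fun_prop))
  have hGcont : ∀ t : ℝ, Continuous (fun u : ℝ =>
      g t * (starRingEnd ℂ) (g u) * (S t u * (starRingEnd ℂ) (S t u))) := by
    intro t
    have hSc : Continuous (fun u => S t u) := by
      apply continuous_finset_sum
      intro k _
      exact e_continuous.comp (by fun_prop)
    exact (continuous_const.mul (Complex.continuous_conj.comp hg)).mul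
      (hSc.mul (Complex.continuous_conj.comp hSc))
  -- conj of A
  have hconjA : ∀ m : ℤ, (starRingEnd ℂ) (A m)
      = ∫ u in δ..(1/2:ℝ), (starRingEnd ℂ) (g u) * e (u ^ d * (m : ℝ)) := by
    intro m
    rw [hA, ← intervalIntegral_conj]
    apply intervalIntegral.integral_congr
    intro u _
    simp only [map_mul, conj_e, neg_neg]
  -- pointwise identity: sum of phase products is |S|^2
  have hsum : ∀ t u : ℝ,
      ∑ p ∈ Finset.range K ×ˢ Finset.range K,
        (g t * e (-(t ^ d * (((p.2 : ℤ) - (p.1 : ℤ) : ℤ) : ℝ))))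
          * ((starRingEnd ℂ) (g u) * e (u ^ d * (((p.2 : ℤ) - (p.1 : ℤ) : ℤ) : ℝ)))
      = g t * (starRingEnd ℂ) (g u) * (S t u * (starRingEnd ℂ) (S t u)) := by
    intro t u
    have hSconj : S t u * (starRingEnd ℂ) (S t u)
        = ∑ j ∈ Finset.range K, ∑ k ∈ Finset.range K,
            (starRingEnd ℂ) (e (j * (u ^ d - t ^ d))) * e (k * (u ^ d - t ^ d)) := by
      rw [mul_comm, hS, map_sum, Finset.sum_mul_sum]
    rw [Finset.sum_product, hSconj, Finset.mul_sum]
    refine Finset.sum_congr rfl fun j _ => ?_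
    rw [Finset.mul_sum]
    refine Finset.sum_congr rfl fun k _ => ?_
    rw [conj_e]
    have hee : e (-(t ^ d * (((k : ℤ) - (j : ℤ) : ℤ) : ℝ))) * e (u ^ d * (((k : ℤ) - (j : ℤ) : ℤ) : ℝ))
        = e (-((j : ℝ) * (u ^ d - t ^ d))) * e ((k : ℝ) * (u ^ d - t ^ d)) := by
      rw [← e_add, ← e_add]
      congr 1
      push_cast
      ring
    rw [← hee]
    ring
  -- the double integral identity
  have hdouble : ∑ p ∈ Finset.range K ×ˢ Finset.range K,
      A ((p.2 : ℤ) - (p.1 : ℤ)) * (starRingEnd ℂ) (A ((p.2 : ℤ) - (p.1 : ℤ)))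
      = ∫ t in δ..(1/2:ℝ), (∫ u in δ..(1/2:ℝ),
          g t * (starRingEnd ℂ) (g u) * (S t u * (starRingEnd ℂ) (S t u))) := by
    have hAc : ∀ m : ℤ, A m * (starRingEnd ℂ) (A m)
        = ∫ t in δ..(1/2:ℝ), g t * e (-(t ^ d * (m : ℝ))) * (starRingEnd ℂ) (A m) := by
      intro m
      rw [intervalIntegral.integral_mul_const]
    rw [Finset.sum_congr rfl fun p _ => hAc ((p.2 : ℤ) - (p.1 : ℤ))]
    have hII : ∀ p ∈ Finset.range K ×ˢ Finset.range K, IntervalIntegrable (fun t => g t * e (-(t ^ d * (((p.2 : ℤ) - (p.1 : ℤ) : ℤ) : ℝ))) * (starRingEnd ℂ) (A ((p.2 : ℤ) - (p.1 : ℤ)))) volume δ (1/2:ℝ) := fun p _ =>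
      ((hcont _).mul continuous_const).intervalIntegrable _ _
    rw [← intervalIntegral.integral_finset_sum hII]
    apply intervalIntegral.integral_congr
    intro t _
    beta_reduce
    have hterm : ∀ p ∈ Finset.range K ×ˢ Finset.range K,
        g t * e (-(t ^ d * (((p.2 : ℤ) - (p.1 : ℤ) : ℤ) : ℝ))) * (starRingEnd ℂ) (A ((p.2 : ℤ) - (p.1 : ℤ)))
        = ∫ u in δ..(1/2:ℝ), (g t * e (-(t ^ d * (((p.2 : ℤ) - (p.1 : ℤ) : ℤ) : ℝ))))
            * ((starRingEnd ℂ) (g u) * e (u ^ d * (((p.2 : ℤ) - (p.1 : ℤ) : ℤ) : ℝ))) := by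
      intro p _
      rw [hconjA, ← intervalIntegral.integral_const_mul]
    rw [Finset.sum_congr rfl hterm]
    refine Eq.trans (Eq.symm (intervalIntegral.integral_finset_sum
      (fun p _ => Continuous.intervalIntegrable (by
        exact continuous_const.mul ((Complex.continuous_conj.comp hg).mul
          (e_continuous.comp (by fun_prop)))) _ _)))
      (intervalIntegral.integral_congr fun u _ => hsum t u)
  -- pointwise bound on the norm of the integrand
  have hnormG : ∀ t ∈ Set.Icc δ (1/2:ℝ), ∀ u ∈ Set.Icc δ (1/2:ℝ),
      ‖g t * (starRingEnd ℂ) (g u) * (S t u * (starRingEnd ℂ) (S t u))‖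
        ≤ 2 * (K:ℝ)^2 / (1 + (β * (u - t))^2) := by
    intro t ht u hu
    have ht0 : 0 < t := lt_of_lt_of_le hδ ht.1
    have hu0 : 0 < u := lt_of_lt_of_le hδ hu.1
    have hnorm : ‖g t * (starRingEnd ℂ) (g u) * (S t u * (starRingEnd ℂ) (S t u))‖
        = ‖S t u‖^2 := by
      rw [norm_mul, norm_mul, norm_mul, RCLike.norm_conj, RCLike.norm_conj, hgn, hgn]
      ring
    rw [hnorm]
    have hden : 0 < 1 + (β * (u - t))^2 := by positivity
    have hdpow : 0 < δ ^ (d-1) := by positivity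
    -- lower bound |u^d - t^d| ≥ δ^{d-1} |u - t|
    have hd1 : δ^(d-1) * |u - t| ≤ |u^d - t^d| := by
      have hgs : (∑ i ∈ Finset.range d, u^i * t^(d-1-i)) * (u - t) = u^d - t^d :=
        geom_sum₂_mul u t d
      have hsumlb : δ^(d-1) ≤ ∑ i ∈ Finset.range d, u^i * t^(d-1-i) := by
        have hterm : ∀ i ∈ Finset.range d, δ^(d-1) ≤ u^i * t^(d-1-i) := by
          intro i hi
          have hi' : i < d := Finset.mem_range.mp hi
          have h1 : δ^i ≤ u^i := pow_le_pow_left₀ hδ.le hu.1 i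
          have h2 : δ^(d-1-i) ≤ t^(d-1-i) := pow_le_pow_left₀ hδ.le ht.1 _
          calc δ^(d-1) = δ^i * δ^(d-1-i) := by
                rw [← pow_add]
                congr 1
                omega
          _ ≤ u^i * t^(d-1-i) := by
                apply mul_le_mul h1 h2 (by positivity) (by positivity)
        calc δ^(d-1) = ∑ _i ∈ Finset.range 1, δ^(d-1) := by simp
        _ ≤ ∑ _i ∈ Finset.range d, δ^(d-1) := by
              apply Finset.sum_le_sum_of_subset_of_nonneg
              · exact Finset.range_subset_range.mpr hd
              · intro i _ _; positivity
        _ ≤ _ := Finset.sum_le_sum hterm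
      calc δ^(d-1) * |u - t| ≤ (∑ i ∈ Finset.range d, u^i * t^(d-1-i)) * |u - t| := by
            apply mul_le_mul_of_nonneg_right hsumlb (abs_nonneg _)
      _ = |(∑ i ∈ Finset.range d, u^i * t^(d-1-i)) * (u - t)| := by
            rw [abs_mul, abs_of_nonneg (le_trans (by positivity) hsumlb)]
      _ = |u^d - t^d| := by rw [hgs]
    have hxle : |u^d - t^d| ≤ 1/2 := by
      have h1 : t^d ≤ (1/2:ℝ)^d := pow_le_pow_left₀ ht0.le ht.2 d
      have h2 : u^d ≤ (1/2:ℝ)^d := pow_le_pow_left₀ hu0.le hu.2 d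
      have h3 : (1/2:ℝ)^d ≤ (1/2:ℝ)^1 := pow_le_pow_of_le_one (by norm_num) (by norm_num) hd
      have h4 : 0 < t^d := by positivity
      have h5 : 0 < u^d := by positivity
      rw [abs_le]
      constructor <;> nlinarith
    by_cases hc : β * |u - t| ≤ 1
    · have h1 : ‖S t u‖ ≤ K := by
        calc ‖S t u‖ ≤ ∑ k ∈ Finset.range K, ‖e (k * (u^d - t^d))‖ := norm_sum_le _ _
        _ = K := by simp only [norm_e]; simp
      rw [le_div_iff₀ hden]
      have h2 : (β * (u - t))^2 ≤ 1 := by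
        have h3 : (β * (u-t))^2 = (β * |u - t|)^2 := by
          simp [mul_pow, sq_abs]
        rw [h3]
        nlinarith [mul_nonneg hβ0.le (abs_nonneg (u - t))]
      nlinarith [norm_nonneg (S t u), sq_nonneg (‖S t u‖)]
    · push_neg at hc
      have hr0 : |u - t| > 0 := by
        rcases eq_or_lt_of_le (abs_nonneg (u - t)) with h | h
        · rw [← h] at hc; simp at hc; linarith
        · exact h
      have hx0 : u^d - t^d ≠ 0 := by
        intro h
        rw [h] at hd1
        simp at hd1
        nlinarith
      have hSb : ‖S t u‖ ≤ 1/(2 * |u^d - t^d|) := norm_geom_sum_le hx0 hxle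
      have hx0' : 0 < |u^d - t^d| := abs_pos.mpr hx0
      have h2 : ‖S t u‖ ≤ K / (β * |u - t|) := by
        apply le_trans hSb
        rw [div_le_div_iff₀ (by positivity) (by positivity)]
        calc 1 * (β * |u - t|) = 2 * (K:ℝ) * (δ^(d-1) * |u - t|) := by rw [hβ]; ring
        _ ≤ 2 * (K:ℝ) * |u^d - t^d| := by
              apply mul_le_mul_of_nonneg_left hd1 (by positivity)
        _ = (K:ℝ) * (2 * |u^d - t^d|) := by ring
      rw [le_div_iff₀ hden]
      have h3 : (β * (u - t))^2 = (β * |u - t|)^2 := by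
        simp [mul_pow, sq_abs]
      have h4 : ‖S t u‖^2 ≤ ((K:ℝ) / (β * |u - t|))^2 :=
        pow_le_pow_left₀ (norm_nonneg _) h2 2
      have h5 : 0 < β * |u - t| := by positivity
      have hb : 1 ≤ (β * |u - t|)^2 := by nlinarith
      have h6 : ((K:ℝ) / (β * |u - t|))^2 * (1 + (β * (u-t))^2) ≤ 2 * (K:ℝ)^2 := by
        rw [h3, div_pow, div_mul_eq_mul_div, div_le_iff₀ (by positivity)]
        have hK0 : (0:ℝ) ≤ (K:ℝ)^2 := sq_nonneg _
        nlinarith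
      nlinarith [sq_nonneg (‖S t u‖), hden, abs_nonneg (u - t)]
  -- integral of the Cauchy-type bound
  have hIu : ∀ t ∈ Set.Icc δ (1/2:ℝ),
      ‖∫ u in δ..(1/2:ℝ), g t * (starRingEnd ℂ) (g u) * (S t u * (starRingEnd ℂ) (S t u))‖
        ≤ Real.pi * K / δ^(d-1) := by
    intro t ht
    have hint1 : IntervalIntegrable (fun u => ‖g t * (starRingEnd ℂ) (g u)
        * (S t u * (starRingEnd ℂ) (S t u))‖) volume δ (1/2:ℝ) :=
      ((hGcont t).norm).intervalIntegrable _ _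
    have hcont2 : Continuous (fun u : ℝ => 2 * (K:ℝ)^2 / (1 + (β * (u - t))^2)) := by
      apply Continuous.div continuous_const (by fun_prop)
      intro u
      positivity
    have harc : ∫ u in δ..(1/2:ℝ), (1 + (β * (u - t))^2)⁻¹
        = β⁻¹ * (Real.arctan (β * ((1:ℝ)/2 - t)) - Real.arctan (β * (δ - t))) := by
      have h1 : ∫ u in δ..(1/2:ℝ), (1 + (β * (u - t))^2)⁻¹
          = ∫ y in δ - t..(1/2:ℝ) - t, (1 + (β * y)^2)⁻¹ :=
        intervalIntegral.integral_comp_sub_right (fun y => (1 + (β * y)^2)⁻¹) t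
      have h2 : ∫ y in δ - t..(1/2:ℝ) - t, (1 + (β * y)^2)⁻¹
          = β⁻¹ • ∫ z in β * (δ - t)..β * ((1:ℝ)/2 - t), ((1:ℝ) + z^2)⁻¹ :=
        intervalIntegral.integral_comp_mul_left (fun z => ((1:ℝ) + z^2)⁻¹) hβ0.ne'
      rw [h1, h2, integral_inv_one_add_sq, smul_eq_mul]
    calc ‖∫ u in δ..(1/2:ℝ), g t * (starRingEnd ℂ) (g u) * (S t u * (starRingEnd ℂ) (S t u))‖
        ≤ ∫ u in δ..(1/2:ℝ), ‖g t * (starRingEnd ℂ) (g u) * (S t u * (starRingEnd ℂ) (S t u))‖ :=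
          intervalIntegral.norm_integral_le_integral_norm hab
    _ ≤ ∫ u in δ..(1/2:ℝ), 2 * (K:ℝ)^2 / (1 + (β * (u - t))^2) := by
          apply intervalIntegral.integral_mono_on hab hint1 (hcont2.intervalIntegrable _ _)
          intro u hu
          exact hnormG t ht u hu
    _ = 2 * (K:ℝ)^2 * ∫ u in δ..(1/2:ℝ), (1 + (β * (u - t))^2)⁻¹ := by
          simp_rw [div_eq_mul_inv]
          rw [intervalIntegral.integral_const_mul]
    _ ≤ 2 * (K:ℝ)^2 * (Real.pi / β) := by
          apply mul_le_mul_of_nonneg_left _ (by positivity)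
          rw [harc]
          have h1 := Real.arctan_lt_pi_div_two (β * ((1:ℝ)/2 - t))
          have h2 := Real.neg_pi_div_two_lt_arctan (β * (δ - t))
          rw [div_eq_inv_mul Real.pi β]
          apply mul_le_mul_of_nonneg_left _ (by positivity)
          linarith
    _ = Real.pi * K / δ^(d-1) := by
          rw [hβ]
          have hKne : (K:ℝ) ≠ 0 := Nat.cast_ne_zero.mpr hK.ne'
          have hdne : δ^(d-1) ≠ 0 := by positivity
          field_simp
  -- conclude
  have hre : ∀ m : ℤ, ‖A m‖^2 = (A m * (starRingEnd ℂ) (A m)).re := by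
    intro m
    rw [Complex.mul_conj, Complex.ofReal_re, Complex.sq_norm]
  calc ∑ p ∈ Finset.range K ×ˢ Finset.range K,
      ‖∫ t in δ..(1/2:ℝ), g t * e (-(t ^ d * (((p.2 : ℤ) - (p.1 : ℤ) : ℤ) : ℝ)))‖ ^ 2
      = (∑ p ∈ Finset.range K ×ˢ Finset.range K,
          A ((p.2 : ℤ) - (p.1 : ℤ)) * (starRingEnd ℂ) (A ((p.2 : ℤ) - (p.1 : ℤ)))).re := by
        rw [Complex.re_sum]
        exact Finset.sum_congr rfl fun p _ => hre _
  _ = (∫ t in δ..(1/2:ℝ), (∫ u in δ..(1/2:ℝ),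
        g t * (starRingEnd ℂ) (g u) * (S t u * (starRingEnd ℂ) (S t u)))).re := by
        rw [hdouble]
  _ ≤ ‖∫ t in δ..(1/2:ℝ), (∫ u in δ..(1/2:ℝ),
        g t * (starRingEnd ℂ) (g u) * (S t u * (starRingEnd ℂ) (S t u)))‖ := by
        exact Complex.re_le_norm _
  _ ≤ (Real.pi * K / δ^(d-1)) * |(1:ℝ)/2 - δ| := by
        apply intervalIntegral.norm_integral_le_of_norm_le_const
        intro t ht
        rw [Set.uIoc_of_le hab] at ht
        exact hIu t (Set.Ioc_subset_Icc_self ht)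
  _ ≤ Real.pi * K / (2 * δ ^ (d - 1)) := by
        rw [abs_of_nonneg (show (0:ℝ) ≤ 1/2 - δ by linarith)]
        have hdpow : 0 < δ ^ (d-1) := by positivity
        rw [div_mul_eq_mul_div, div_le_div_iff₀ (by positivity) (by positivity)]
        have hπK : 0 ≤ Real.pi * K := by positivity
        nlinarith [mul_nonneg (mul_nonneg hπK hdpow.le) hδ.le]

set_option maxHeartbeats 4000000 in
/-- L² estimate on the Fourier transform of the moment curve measure over [δ, 1/2]. -/
theorem stmt_10 (d : ℕ) (hd : 2 ≤ d) :
    ∃ C : ℝ, 0 < C ∧ ∀ (δ : ℝ) (N : ℕ), 0 < δ → δ < 1 / 2 → 1 < (N : ℝ) * δ →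
      ∑ ξ ∈ Fintype.piFinset (fun i : Fin d =>
          Finset.Icc (-(((d * (d + 1) / 2 : ℕ) : ℤ) * (N : ℤ) ^ (i.1 + 1)))
            (((d * (d + 1) / 2 : ℕ) : ℤ) * (N : ℤ) ^ (i.1 + 1))),
        ‖∫ t in δ..(1 / 2 : ℝ), e (-(∑ i : Fin d, t ^ (i.1 + 1) * (ξ i : ℝ)))‖ ^ 2
      ≤ C * δ ^ ((1 : ℝ) - d) * (N : ℝ) ^ (d * (d + 1) / 2 - d) := by
  have hπ := Real.pi_pos
  set s : ℕ := d * (d + 1) / 2 with hs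
  have hsd : d ≤ s := by
    rw [hs, Nat.le_div_iff_mul_le (by norm_num)]
    exact Nat.mul_le_mul_left d (by omega)
  have hs1 : 1 ≤ s := le_trans (by omega) hsd
  refine ⟨4 * (3 * (s:ℝ)) ^ d, by positivity, ?_⟩
  intro δ N hδ hδ2 hNδ
  have hN : 1 ≤ N := by
    rcases Nat.eq_zero_or_pos N with h | h
    · subst h; simp at hNδ; linarith
    · exact h
  have hNR : (1:ℝ) ≤ (N:ℝ) := by exact_mod_cast hN
  set last : Fin d := ⟨d - 1, by omega⟩ with hlastdef
  have hlast : (last : ℕ) + 1 = d := by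
    show d - 1 + 1 = d
    omega
  set M : ℕ := s * N ^ d with hMdef
  have hM1 : 1 ≤ M := by
    rw [hMdef]
    exact Nat.one_le_iff_ne_zero.mpr (by positivity)
  set K : ℕ := 2 * M with hKdef
  have hK0 : 0 < K := by omega
  set f : (Fin d → ℤ) → ℝ := fun ξ =>
    ‖∫ t in δ..(1 / 2 : ℝ), e (-(∑ i : Fin d, t ^ (i.1 + 1) * (ξ i : ℝ)))‖ ^ 2 with hf
  have hf0 : ∀ ξ, 0 ≤ f ξ := fun ξ => by rw [hf]; positivity
  set B : Finset (Fin d → ℤ) := Fintype.piFinset (fun i : Fin d =>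
    Finset.Icc (-((s:ℤ) * (N:ℤ) ^ (i.1 + 1))) ((s:ℤ) * (N:ℤ) ^ (i.1 + 1))) with hB
  set B' : Finset (Fin d → ℤ) := Fintype.piFinset (fun i : Fin d =>
    if i = last then ({0} : Finset ℤ)
    else Finset.Icc (-((s:ℤ) * (N:ℤ) ^ (i.1 + 1))) ((s:ℤ) * (N:ℤ) ^ (i.1 + 1))) with hB'
  -- step 1
  have hKR : (K:ℝ) = 2 * (M:ℝ) := by rw [hKdef]; push_cast; ring
  have hMR : (0:ℝ) < (M:ℝ) := by exact_mod_cast hM1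
  have step1 : 2 * ∑ p ∈ B ×ˢ Finset.range M, (K:ℝ)⁻¹ * f p.1 = ∑ ξ ∈ B, f ξ := by
    rw [Finset.sum_product]
    simp only [Finset.sum_const, Finset.card_range, nsmul_eq_mul]
    rw [← Finset.mul_sum, ← Finset.mul_sum, ← mul_assoc, ← mul_assoc]
    rw [show (2:ℝ) * (M:ℝ) * (K:ℝ)⁻¹ = 1 by rw [hKR]; field_simp]
    rw [one_mul]
  -- step 2 : injection
  have step2 : ∑ p ∈ B ×ˢ Finset.range M, (K:ℝ)⁻¹ * f p.1
      ≤ ∑ q ∈ B' ×ˢ (Finset.range K ×ˢ Finset.range K),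
          (K:ℝ)⁻¹ * f (Function.update q.1 last ((q.2.2 : ℤ) - (q.2.1 : ℤ))) := by
    set ι : ((Fin d → ℤ) × ℕ) → ((Fin d → ℤ) × (ℕ × ℕ)) :=
      fun p => (Function.update p.1 last 0,
        (p.2 + (-(p.1 last)).toNat, p.2 + (p.1 last).toNat)) with hι
    have hMbound : ∀ p : (Fin d → ℤ) × ℕ, p ∈ B ×ˢ Finset.range M →
        -(M:ℤ) ≤ p.1 last ∧ p.1 last ≤ (M:ℤ) ∧ p.2 < M := by
      intro p hp
      rw [Finset.mem_product] at hp
      have h1 := Fintype.mem_piFinset.mp hp.1 last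
      rw [Finset.mem_Icc] at h1
      have h2 : (s:ℤ) * (N:ℤ) ^ ((last:ℕ) + 1) = (M:ℤ) := by
        rw [hMdef, hlast]; push_cast; ring
      rw [h2] at h1
      exact ⟨h1.1, h1.2, Finset.mem_range.mp hp.2⟩
    have hmem : ∀ p ∈ B ×ˢ Finset.range M, ι p ∈ B' ×ˢ (Finset.range K ×ˢ Finset.range K) := by
      intro p hp
      obtain ⟨hb1, hb2, hb3⟩ := hMbound p hp
      rw [Finset.mem_product] at hp
      rw [Finset.mem_product, Finset.mem_product]
      refine ⟨?_, ?_, ?_⟩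
      · rw [Fintype.mem_piFinset]
        intro i
        simp only [hι]
        by_cases hi : i = last
        · subst hi
          simp [Function.update_self]
        · rw [if_neg hi, Function.update_of_ne hi]
          exact Fintype.mem_piFinset.mp hp.1 i
      · rw [Finset.mem_range]
        show p.2 + (-(p.1 last)).toNat < K
        omega
      · rw [Finset.mem_range]
        show p.2 + (p.1 last).toNat < K
        omega
    have hval : ∀ p ∈ B ×ˢ Finset.range M,
        (K:ℝ)⁻¹ * f (Function.update (ι p).1 last (((ι p).2.2 : ℤ) - ((ι p).2.1 : ℤ)))
          = (K:ℝ)⁻¹ * f p.1 := by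
      intro p hp
      have h1 : (((ι p).2.2 : ℤ) - ((ι p).2.1 : ℤ)) = p.1 last := by
        show ((p.2 + (p.1 last).toNat : ℕ) : ℤ) - ((p.2 + (-(p.1 last)).toNat : ℕ) : ℤ) = p.1 last
        push_cast
        omega
      have h2 : Function.update (ι p).1 last (((ι p).2.2 : ℤ) - ((ι p).2.1 : ℤ)) = p.1 := by
        rw [h1]
        show Function.update (Function.update p.1 last 0) last (p.1 last) = p.1
        rw [Function.update_idem, Function.update_eq_self]
      rw [h2]
    have hinj : ∀ p ∈ B ×ˢ Finset.range M, ∀ q ∈ B ×ˢ Finset.range M, ι p = ι q → p = q := by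
      intro p hp q hq h
      have h2 : (ι p).1 = (ι q).1 := by rw [h]
      have h3 : (ι p).2.1 = (ι q).2.1 := by rw [h]
      have h4 : (ι p).2.2 = (ι q).2.2 := by rw [h]
      simp only [hι] at h2 h3 h4
      have hl : p.1 last = q.1 last := by omega
      have hj : p.2 = q.2 := by omega
      have hfun : p.1 = q.1 := by
        funext i
        by_cases hi : i = last
        · subst hi; exact hl
        · have := congrFun h2 i
          rwa [Function.update_of_ne hi, Function.update_of_ne hi] at this
      exact Prod.ext hfun hj
    calc ∑ p ∈ B ×ˢ Finset.range M, (K:ℝ)⁻¹ * f p.1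
        = ∑ p ∈ B ×ˢ Finset.range M,
            (K:ℝ)⁻¹ * f (Function.update (ι p).1 last (((ι p).2.2 : ℤ) - ((ι p).2.1 : ℤ))) :=
          (Finset.sum_congr rfl hval).symm
    _ = ∑ q ∈ (B ×ˢ Finset.range M).image ι,
            (K:ℝ)⁻¹ * f (Function.update q.1 last ((q.2.2 : ℤ) - (q.2.1 : ℤ))) := by
          rw [Finset.sum_image hinj]
    _ ≤ ∑ q ∈ B' ×ˢ (Finset.range K ×ˢ Finset.range K),
            (K:ℝ)⁻¹ * f (Function.update q.1 last ((q.2.2 : ℤ) - (q.2.1 : ℤ))) := by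
          apply Finset.sum_le_sum_of_subset_of_nonneg
          · intro q hq
            rw [Finset.mem_image] at hq
            obtain ⟨p, hp, rfl⟩ := hq
            exact hmem p hp
          · intro q _ _
            exact mul_nonneg (by positivity) (hf0 _)
  -- step 3 : per-fiber bound via key_bound
  have step3 : ∀ ζ : Fin d → ℤ,
      ∑ q ∈ Finset.range K ×ˢ Finset.range K,
        (K:ℝ)⁻¹ * f (Function.update ζ last ((q.2 : ℤ) - (q.1 : ℤ)))
      ≤ Real.pi / (2 * δ ^ (d - 1)) := by
    intro ζ
    set g0 : ℝ → ℂ := fun t =>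
      e (-(∑ i ∈ Finset.univ.erase last, t ^ (i.1 + 1) * (ζ i : ℝ))) with hg0
    have hg0c : Continuous g0 := by
      apply e_continuous.comp
      apply Continuous.neg
      apply continuous_finset_sum
      intro i _
      fun_prop
    have hg0n : ∀ t, ‖g0 t‖ = 1 := fun t => norm_e _
    have hfu : ∀ m : ℤ, f (Function.update ζ last m)
        = ‖∫ t in δ..(1 / 2 : ℝ), g0 t * e (-(t ^ d * (m : ℝ)))‖ ^ 2 := by
      intro m
      have hEq : Set.EqOn
          (fun t : ℝ => e (-(∑ i : Fin d, t ^ (i.1 + 1) * ((Function.update ζ last m) i : ℝ))))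
          (fun t : ℝ => g0 t * e (-(t ^ d * (m : ℝ)))) (Set.uIcc δ (1/2:ℝ)) := by
        intro t _
        beta_reduce
        have hsplit : (∑ i : Fin d, t ^ (i.1 + 1) * ((Function.update ζ last m) i : ℝ))
            = (∑ i ∈ Finset.univ.erase last, t ^ (i.1 + 1) * (ζ i : ℝ)) + t ^ d * (m : ℝ) := by
          rw [← Finset.sum_erase_add _ _ (Finset.mem_univ last)]
          congr 1
          · apply Finset.sum_congr rfl
            intro i hi
            rw [Function.update_of_ne (Finset.ne_of_mem_erase hi)]
          · rw [Function.update_self, hlast]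
        rw [hsplit, neg_add, e_add]
      rw [hf]
      beta_reduce
      rw [intervalIntegral.integral_congr hEq]
    calc ∑ q ∈ Finset.range K ×ˢ Finset.range K,
          (K:ℝ)⁻¹ * f (Function.update ζ last ((q.2 : ℤ) - (q.1 : ℤ)))
        = (K:ℝ)⁻¹ * ∑ q ∈ Finset.range K ×ˢ Finset.range K,
            ‖∫ t in δ..(1 / 2 : ℝ), g0 t * e (-(t ^ d * (((q.2 : ℤ) - (q.1 : ℤ) : ℤ) : ℝ)))‖ ^ 2 := by
          rw [Finset.mul_sum]
          exact Finset.sum_congr rfl fun q _ => by rw [hfu]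
    _ ≤ (K:ℝ)⁻¹ * (Real.pi * K / (2 * δ ^ (d - 1))) := by
          apply mul_le_mul_of_nonneg_left _ (by positivity)
          exact key_bound δ hδ hδ2 d (by omega) K hK0 g0 hg0c hg0n
    _ = Real.pi / (2 * δ ^ (d - 1)) := by
          have hKne : (K:ℝ) ≠ 0 := by positivity
          have hdne : (2:ℝ) * δ ^ (d - 1) ≠ 0 := by positivity
          field_simp
  -- step 4 : cardinality of B'
  have hsum_erase : ∑ i ∈ Finset.univ.erase last, ((i : ℕ) + 1) = s - d := by
    have h1 : ∑ i : Fin d, ((i : ℕ) + 1) = s := by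
      rw [Fin.sum_univ_eq_sum_range (fun i => i + 1) d]
      have h2 := Finset.sum_range_succ' (fun i => i) d
      simp only [add_zero] at h2
      rw [← h2, Finset.sum_range_id, hs, Nat.add_sub_cancel, Nat.mul_comm]
    have h4 := Finset.sum_erase_add Finset.univ (fun i : Fin d => (i : ℕ) + 1)
      (Finset.mem_univ last)
    beta_reduce at h4
    rw [h1, hlast] at h4
    omega
  have hBcard : (B'.card : ℝ) ≤ (3 * (s:ℝ)) ^ (d - 1) * (N:ℝ) ^ (s - d) := by
    rw [hB', Fintype.card_piFinset]
    push_cast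
    calc ∏ i : Fin d, (((if i = last then ({0} : Finset ℤ)
          else Finset.Icc (-((s:ℤ) * (N:ℤ) ^ (i.1 + 1))) ((s:ℤ) * (N:ℤ) ^ (i.1 + 1))).card : ℝ))
        ≤ ∏ i : Fin d, (if i = last then (1:ℝ) else 3 * (s:ℝ) * (N:ℝ) ^ ((i:ℕ) + 1)) := by
          apply Finset.prod_le_prod
          · intro i _; positivity
          · intro i _
            by_cases hi : i = last
            · simp [hi]
            · rw [if_neg hi, if_neg hi]
              rw [Int.card_Icc]
              have hpow1 : (1:ℝ) ≤ (s:ℝ) * (N:ℝ) ^ ((i:ℕ) + 1) := by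
                have h5 : (1:ℝ) ≤ (N:ℝ) ^ ((i:ℕ) + 1) := one_le_pow₀ hNR
                have h6 : (1:ℝ) ≤ (s:ℝ) := by exact_mod_cast hs1
                nlinarith
              have hnn : (0:ℤ) ≤ (s:ℤ) * (N:ℤ) ^ ((i:ℕ) + 1) := by positivity
              have h7 : ((s:ℤ) * (N:ℤ) ^ ((i:ℕ) + 1) + 1 - -((s:ℤ) * (N:ℤ) ^ ((i:ℕ) + 1))).toNat
                  = 2 * ((s:ℤ) * (N:ℤ) ^ ((i:ℕ) + 1)).toNat + 1 := by omega
              rw [h7]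
              have h8 : ((((s:ℤ) * (N:ℤ) ^ ((i:ℕ) + 1)).toNat : ℕ) : ℝ)
                  = (s:ℝ) * (N:ℝ) ^ ((i:ℕ) + 1) := by
                rw [← Int.cast_natCast (R := ℝ), Int.toNat_of_nonneg hnn]
                push_cast
                ring
              push_cast
              rw [h8]
              linarith
    _ = (3 * (s:ℝ)) ^ (d - 1) * (N:ℝ) ^ (s - d) := by
          rw [← Finset.prod_erase_mul Finset.univ _ (Finset.mem_univ last)]
          rw [if_pos rfl, mul_one]
          rw [Finset.prod_congr rfl (fun i hi => if_neg (Finset.ne_of_mem_erase hi))]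
          rw [Finset.prod_mul_distrib, Finset.prod_const, Finset.prod_pow_eq_pow_sum]
          rw [Finset.card_erase_of_mem (Finset.mem_univ last), Finset.card_univ,
            Fintype.card_fin, hsum_erase]
  -- final assembly
  have hrpow : δ ^ ((1:ℝ) - (d:ℝ)) = (δ ^ (d - 1 : ℕ))⁻¹ := by
    have h1 : ((1:ℝ) - (d:ℝ)) = -(((d - 1 : ℕ) : ℝ)) := by
      rw [Nat.cast_sub (by omega : 1 ≤ d)]
      push_cast
      ring
    rw [h1, Real.rpow_neg hδ.le, Real.rpow_natCast]
  have hδpow : (0:ℝ) < δ ^ (d - 1) := by positivity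
  calc ∑ ξ ∈ B, f ξ
      = 2 * ∑ p ∈ B ×ˢ Finset.range M, (K:ℝ)⁻¹ * f p.1 := step1.symm
  _ ≤ 2 * ∑ q ∈ B' ×ˢ (Finset.range K ×ˢ Finset.range K),
        (K:ℝ)⁻¹ * f (Function.update q.1 last ((q.2.2 : ℤ) - (q.2.1 : ℤ))) := by
        linarith [step2]
  _ = 2 * ∑ ζ ∈ B', ∑ q ∈ Finset.range K ×ˢ Finset.range K,
        (K:ℝ)⁻¹ * f (Function.update ζ last ((q.2 : ℤ) - (q.1 : ℤ))) := by
        rw [Finset.sum_product]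
  _ ≤ 2 * ∑ _ζ ∈ B', Real.pi / (2 * δ ^ (d - 1)) := by
        apply mul_le_mul_of_nonneg_left (Finset.sum_le_sum fun ζ _ => step3 ζ) (by norm_num)
  _ = (B'.card : ℝ) * Real.pi * (δ ^ (d - 1))⁻¹ := by
        rw [Finset.sum_const, nsmul_eq_mul]
        field_simp
  _ ≤ (4 * (3 * (s:ℝ)) ^ d * (N:ℝ) ^ (s - d)) * (δ ^ (d - 1))⁻¹ := by
        apply mul_le_mul_of_nonneg_right _ (by positivity)
        have hπ4 : Real.pi ≤ 4 := by linarith [Real.pi_le_four]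
        have h3s : ((3 * (s:ℝ))) ^ (d - 1) ≤ (3 * (s:ℝ)) ^ d := by
          apply pow_le_pow_right₀ (by nlinarith [hs1, (by exact_mod_cast hs1 : (1:ℝ) ≤ (s:ℝ))]) (by omega)
        have hNpow : (0:ℝ) ≤ (N:ℝ) ^ (s - d) := by positivity
        calc (B'.card : ℝ) * Real.pi
            ≤ ((3 * (s:ℝ)) ^ (d - 1) * (N:ℝ) ^ (s - d)) * 4 :=
              mul_le_mul hBcard hπ4 hπ.le (by positivity)
        _ ≤ 4 * (3 * (s:ℝ)) ^ d * (N:ℝ) ^ (s - d) := by nlinarith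
  _ = 4 * (3 * (s:ℝ)) ^ d * δ ^ ((1:ℝ) - (d:ℝ)) * (N:ℝ) ^ (s - d) := by
        rw [hrpow]
        ring
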